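/- arXiv:1312.2582 — 2 statements merged into one kernel-verified Lean document; each statement's English description precedes it below -/
import Mathlib

section
/- For every a > 0 and every real x ≠ 0, the improper integral ∫_0^∞ sin(x·ξ)/(ξ + a) dξ converges and equals −S_a(x) = −sign(x)·(si(a|x|)·cos(a|x|) − ci(a|x|)·sin(a|x|)). -/
open Filter MeasureTheory Topology

/-- The sine integral `si(x) = -∫_x^∞ sin t / t dt`, defined via the improper
(limit of interval integrals) form. -/
noncomputable def si (x : ℝ) : ℝ :=
  - limUnder Filter.atTop (fun R : ℝ => ∫ t in x..R, Real.sin t / t)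

/-- The cosine integral `ci(x) = -∫_x^∞ cos t / t dt`, defined via the improper
(limit of interval integrals) form. -/
noncomputable def ci (x : ℝ) : ℝ :=
  - limUnder Filter.atTop (fun R : ℝ => ∫ t in x..R, Real.cos t / t)

/-- The kernel `S_a(x) = sign(x) (si(a|x|) cos(a|x|) - ci(a|x|) sin(a|x|))`, with `S_a(0)=0`. -/
noncomputable def Sker (a x : ℝ) : ℝ :=
  Real.sign x * (si (a * |x|) * Real.cos (a * |x|) - ci (a * |x|) * Real.sin (a * |x|))

/-- The kernel `T_a(x) = si(a|x|) sin(a|x|) + ci(a|x|) cos(a|x|)`. -/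
noncomputable def Tker (a x : ℝ) : ℝ :=
  si (a * |x|) * Real.sin (a * |x|) + ci (a * |x|) * Real.cos (a * |x|)

open Set intervalIntegral

lemma conv_aux (f F : ℝ → ℝ) (hF : ∀ t, HasDerivAt F (f t) t)
    (hf : Continuous f) (hFb : ∀ t, |F t| ≤ 1) (c : ℝ) (hc : 0 < c) :
    Tendsto (fun R : ℝ => ∫ t in c..R, f t / t) atTop
      (nhds (0 - F c / c + ∫ t in Ioi c, F t / t ^ 2)) := by
  have hFc : Continuous F := continuous_iff_continuousAt.2 fun t => (hF t).continuousAt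
  have hint : IntegrableOn (fun t => F t / t ^ 2) (Ioi c) := by
    have h2 : IntegrableOn (fun t : ℝ => t ^ (-2 : ℝ)) (Ioi c) :=
      integrableOn_Ioi_rpow_of_lt (by norm_num) hc
    refine h2.mono' ((hFc.measurable.div (measurable_id.pow_const 2)).aestronglyMeasurable) ?_
    filter_upwards [ae_restrict_mem measurableSet_Ioi] with t ht
    have ht0 : (0:ℝ) < t := hc.trans ht
    rw [Real.rpow_neg ht0.le, Real.norm_eq_abs, abs_div, abs_of_pos (pow_pos ht0 2)]
    rw [show ((2:ℝ)) = ((2:ℕ):ℝ) by norm_num, Real.rpow_natCast]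
    rw [← one_div]
    gcongr
    exact hFb t
  have key : ∀ R : ℝ, c ≤ R → ∫ t in c..R, f t / t =
      F R * R⁻¹ - F c * c⁻¹ + ∫ t in c..R, F t / t ^ 2 := by
    intro R hR
    have huIcc : Set.uIcc c R = Icc c R := uIcc_of_le hR
    have hpos : ∀ t ∈ Set.uIcc c R, (0:ℝ) < t := by
      intro t ht; rw [huIcc] at ht; exact hc.trans_le ht.1
    have hu : ∀ t ∈ Set.uIcc c R, HasDerivAt (fun y : ℝ => y⁻¹) (-(t ^ 2)⁻¹) t :=
      fun t ht => hasDerivAt_inv (hpos t ht).ne'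
    have hv : ∀ t ∈ Set.uIcc c R, HasDerivAt F (f t) t := fun t _ => hF t
    have hu' : IntervalIntegrable (fun t : ℝ => -(t ^ 2)⁻¹) volume c R := by
      apply ContinuousOn.intervalIntegrable
      exact (continuousOn_inv₀.comp (continuousOn_pow 2)
        (fun t ht => pow_ne_zero 2 (hpos t ht).ne')).neg
    have hv' : IntervalIntegrable f volume c R := hf.intervalIntegrable c R
    have hparts := intervalIntegral.integral_mul_deriv_eq_deriv_mul hu hv hu' hv'
    have h1 : ∀ t : ℝ, f t / t = t⁻¹ * f t := fun t => (div_eq_inv_mul _ _)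
    simp only [h1]
    rw [hparts]
    rw [show (∫ t in c..R, -(t ^ 2)⁻¹ * F t) = -∫ t in c..R, F t / t ^ 2 by
      rw [← intervalIntegral.integral_neg]; congr 1; funext t; rw [div_eq_inv_mul]; ring]
    ring
  have h1 : Tendsto (fun R : ℝ => F R * R⁻¹) atTop (nhds 0) := by
    refine squeeze_zero_norm' ?_ tendsto_inv_atTop_zero
    filter_upwards [eventually_gt_atTop (0:ℝ)] with R hR
    rw [Real.norm_eq_abs, abs_mul, abs_inv, abs_of_pos hR]
    calc |F R| * R⁻¹ ≤ 1 * R⁻¹ := by gcongr; exact hFb R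
      _ = R⁻¹ := one_mul _
  have h2 : Tendsto (fun R : ℝ => ∫ t in c..R, F t / t ^ 2) atTop
      (nhds (∫ t in Ioi c, F t / t ^ 2)) :=
    intervalIntegral_tendsto_integral_Ioi c hint tendsto_id
  have h3 := ((h1.sub_const (F c * c⁻¹)).add h2)
  rw [show (0:ℝ) - F c / c = 0 - F c * c⁻¹ by rw [div_eq_mul_inv]]
  apply h3.congr'
  filter_upwards [eventually_ge_atTop c] with R hR
  exact (key R hR).symm

lemma si_tendsto {c : ℝ} (hc : 0 < c) :
    Tendsto (fun R : ℝ => ∫ t in c..R, Real.sin t / t) atTop (nhds (-si c)) := by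
  have h := conv_aux Real.sin (fun t => -Real.cos t)
    (fun t => by have := (Real.hasDerivAt_cos t).neg; rwa [neg_neg] at this)
    Real.continuous_sin (fun t => by simpa using Real.abs_cos_le_one t) c hc
  have : si c = -(0 - -Real.cos c / c + ∫ t in Set.Ioi c, -Real.cos t / t ^ 2) := by
    rw [si, h.limUnder_eq]
  rw [this, neg_neg]
  exact h

lemma ci_tendsto {c : ℝ} (hc : 0 < c) :
    Tendsto (fun R : ℝ => ∫ t in c..R, Real.cos t / t) atTop (nhds (-ci c)) := by
  have h := conv_aux Real.cos Real.sin (fun t => Real.hasDerivAt_sin t)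
    Real.continuous_cos (fun t => Real.abs_sin_le_one t) c hc
  have : ci c = -(0 - Real.sin c / c + ∫ t in Set.Ioi c, Real.sin t / t ^ 2) := by
    rw [ci, h.limUnder_eq]
  rw [this, neg_neg]
  exact h

lemma pos_case {a x : ℝ} (ha : 0 < a) (hx : 0 < x) :
    Tendsto (fun R : ℝ => ∫ ξ in (0:ℝ)..R, Real.sin (x * ξ) / (ξ + a)) atTop
      (nhds (Real.cos (x*a) * (-si (x*a)) - Real.sin (x*a) * (-ci (x*a)))) := by
  have hca : 0 < x * a := mul_pos hx ha
  have key : ∀ R : ℝ, 0 ≤ R →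
      ∫ ξ in (0:ℝ)..R, Real.sin (x * ξ) / (ξ + a) =
        Real.cos (x*a) * (∫ t in (x*a)..(x*(R+a)), Real.sin t / t)
          - Real.sin (x*a) * (∫ t in (x*a)..(x*(R+a)), Real.cos t / t) := by
    intro R hR
    have e1 : ∫ ξ in (0:ℝ)..R, Real.sin (x * ξ) / (ξ + a)
        = ∫ y in a..(R+a), Real.sin (x * (y - a)) / y := by
      have h := intervalIntegral.integral_comp_add_right (a := (0:ℝ)) (b := R)
        (fun y => Real.sin (x * (y - a)) / y) a
      simp only [add_sub_cancel_right, zero_add] at h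
      exact h
    have e2 : ∫ y in a..(R+a), Real.sin (x * (y - a)) / y
        = ∫ t in (x*a)..(x*(R+a)), Real.sin (t - x*a) / t := by
      have hfun : ∀ y : ℝ, Real.sin (x * (y - a)) / y
          = x * (Real.sin (x * y - x*a) / (x * y)) := by
        intro y
        rw [mul_sub, mul_div_assoc', mul_div_mul_left _ _ hx.ne']
      simp_rw [hfun]
      rw [intervalIntegral.integral_const_mul,
        intervalIntegral.integral_comp_mul_left (fun t => Real.sin (t - x*a) / t) hx.ne']
      rw [smul_eq_mul, ← mul_assoc, mul_inv_cancel₀ hx.ne', one_mul]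
    have hpos : ∀ t ∈ Set.uIcc (x*a) (x*(R+a)), (0:ℝ) < t := by
      intro t ht
      rw [Set.uIcc_of_le (by nlinarith)] at ht
      exact hca.trans_le ht.1
    have hintS : IntervalIntegrable (fun t => Real.sin t / t) volume (x*a) (x*(R+a)) :=
      (Real.continuous_sin.continuousOn.div continuousOn_id
        (fun t ht => (hpos t ht).ne')).intervalIntegrable
    have hintC : IntervalIntegrable (fun t => Real.cos t / t) volume (x*a) (x*(R+a)) :=
      (Real.continuous_cos.continuousOn.div continuousOn_id
        (fun t ht => (hpos t ht).ne')).intervalIntegrable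
    have e3 : ∫ t in (x*a)..(x*(R+a)), Real.sin (t - x*a) / t
        = ∫ t in (x*a)..(x*(R+a)),
            (Real.cos (x*a) * (Real.sin t / t) - Real.sin (x*a) * (Real.cos t / t)) := by
      congr 1; funext t
      rw [Real.sin_sub, sub_div, mul_comm (Real.sin t), mul_comm (Real.cos t),
        mul_div_assoc, mul_div_assoc]
    rw [e1, e2, e3, intervalIntegral.integral_sub (hintS.const_mul _) (hintC.const_mul _),
      intervalIntegral.integral_const_mul, intervalIntegral.integral_const_mul]
  have hT : Tendsto (fun R : ℝ => x * (R + a)) atTop atTop :=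
    (tendsto_atTop_add_const_right atTop a tendsto_id).const_mul_atTop hx
  have hsin : Tendsto (fun R : ℝ => ∫ t in (x*a)..(x*(R+a)), Real.sin t / t) atTop
      (nhds (-si (x*a))) := (si_tendsto hca).comp hT
  have hcos : Tendsto (fun R : ℝ => ∫ t in (x*a)..(x*(R+a)), Real.cos t / t) atTop
      (nhds (-ci (x*a))) := (ci_tendsto hca).comp hT
  apply ((tendsto_const_nhds.mul hsin).sub (tendsto_const_nhds.mul hcos)).congr'
  filter_upwards [eventually_ge_atTop (0:ℝ)] with R hR
  exact (key R hR).symm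

/-- `∫_0^∞ sin(xξ)/(ξ+a) dξ` converges (as an improper integral) to `-S_a(x)`. -/
theorem stmt4 (a : ℝ) (ha : 0 < a) (x : ℝ) (hx : x ≠ 0) :
    Tendsto (fun R : ℝ => ∫ ξ in (0:ℝ)..R, Real.sin (x * ξ) / (ξ + a))
      atTop (nhds (-(Sker a x))) := by
  rcases hx.lt_or_gt with h | h
  · have hp := pos_case (x := -x) ha (neg_pos.2 h)
    have heq : ∀ R : ℝ, -∫ ξ in (0:ℝ)..R, Real.sin ((-x) * ξ) / (ξ + a)
        = ∫ ξ in (0:ℝ)..R, Real.sin (x * ξ) / (ξ + a) := by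
      intro R
      rw [← intervalIntegral.integral_neg]
      congr 1; funext ξ
      rw [← neg_div, ← Real.sin_neg, neg_mul, neg_neg]
    have hval : -(Sker a x)
        = -(Real.cos ((-x)*a) * (-si ((-x)*a)) - Real.sin ((-x)*a) * (-ci ((-x)*a))) := by
      rw [Sker, Real.sign_of_neg h, abs_of_neg h, mul_comm a (-x)]; ring
    rw [hval]
    exact hp.neg.congr heq
  · have hval : -(Sker a x)
        = Real.cos (x*a) * (-si (x*a)) - Real.sin (x*a) * (-ci (x*a)) := by
      rw [Sker, Real.sign_of_pos h, abs_of_pos h, mul_comm a x]; ring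
    rw [hval]
    exact pos_case ha h
end

section
/- For every a > 0 and every ξ > 0, the improper integral ∫_0^∞ S_a(x)·sin(ξ·x) dx converges (as the limit of ∫_0^R as R → ∞) and equals −π/(2(ξ + a)). Consequently, the Fourier transform of the odd function S_a, understood in the improper sense lim_{R→∞} ∫_{−R}^{R} S_a(x)·e^{iξx} dx, equals −iπ·sign(ξ)/(|ξ| + a) for ξ ≠ 0. -/
open Filter MeasureTheory Topology

section Aux
open Set

noncomputable def gg (y : ℝ) : ℝ := ∫ u in Set.Ioi (0:ℝ), Real.exp (-(|y| * u)) / (1 + u^2)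

lemma exp_abs_div_le {y u : ℝ} (hu : 0 ≤ u) :
    Real.exp (-(|y| * u)) / (1 + u^2) ≤ (1 + u^2)⁻¹ := by
  rw [div_le_iff₀ (by positivity), inv_mul_cancel₀ (by positivity : (1+u^2) ≠ 0)]
  exact Real.exp_le_one_iff.mpr (neg_nonpos.mpr (mul_nonneg (abs_nonneg y) hu))

lemma exp_abs_div_norm_le {y u : ℝ} (hu : 0 ≤ u) :
    ‖Real.exp (-(|y| * u)) / (1 + u^2)‖ ≤ (1 + u^2)⁻¹ := by
  rw [Real.norm_eq_abs, abs_of_nonneg (by positivity)]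
  exact exp_abs_div_le hu

lemma gg_integrand_integrable (y : ℝ) :
    IntegrableOn (fun u => Real.exp (-(|y| * u)) / (1 + u^2)) (Ioi 0) := by
  apply Integrable.mono' (integrable_inv_one_add_sq.integrableOn)
  · exact ((Real.continuous_exp.comp (continuous_const.mul continuous_id).neg).div
      (by continuity) (fun u => by positivity)).aestronglyMeasurable
  · filter_upwards [ae_restrict_mem measurableSet_Ioi] with u hu
    exact exp_abs_div_norm_le hu.le

lemma gg_nonneg (y : ℝ) : 0 ≤ gg y :=
  integral_nonneg fun u => by positivity

lemma pi_half_eq : Real.pi / 2 = ∫ u in Ioi (0:ℝ), (1 + u^2)⁻¹ := by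
  rw [integral_Ioi_inv_one_add_sq]; simp

lemma gg_le (y : ℝ) : gg y ≤ Real.pi / 2 := by
  rw [gg, pi_half_eq]
  apply setIntegral_mono_on (gg_integrand_integrable y)
    (integrable_inv_one_add_sq.integrableOn) measurableSet_Ioi
  intro u hu
  exact exp_abs_div_le hu.le

lemma gg_cont : Continuous gg := by
  apply MeasureTheory.continuous_of_dominated (bound := fun u => (1 + u^2)⁻¹)
  · exact fun y => (gg_integrand_integrable y).aestronglyMeasurable
  · intro y
    filter_upwards [ae_restrict_mem measurableSet_Ioi] with u hu
    exact exp_abs_div_norm_le hu.le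
  · exact integrable_inv_one_add_sq.integrableOn
  · filter_upwards [ae_restrict_mem measurableSet_Ioi] with u hu
    exact ((Real.continuous_exp.comp ((continuous_abs.mul continuous_const)).neg).div
      continuous_const (fun y => by positivity))

-- ∫_0^S e^{-su} sin s ds
lemma ftc_exp_sin (u S : ℝ) :
    ∫ s in (0:ℝ)..S, Real.exp (-(s*u)) * Real.sin s
      = (1 - Real.exp (-(S*u)) * (Real.cos S + u * Real.sin S)) / (1 + u^2) := by
  have h : ∀ s : ℝ, HasDerivAt (fun s => -(Real.exp (-(s*u)) * (Real.cos s + u * Real.sin s)) / (1 + u^2))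
      (Real.exp (-(s*u)) * Real.sin s) s := by
    intro s
    have he : HasDerivAt (fun s : ℝ => Real.exp (-(s*u))) (-u * Real.exp (-(s*u))) s := by
      have := (Real.hasDerivAt_exp (-(s*u))).comp s (((hasDerivAt_id s).mul_const u).neg)
      simpa [mul_comm, Function.comp_def] using this
    have hc : HasDerivAt (fun s : ℝ => Real.cos s + u * Real.sin s)
        (-Real.sin s + u * Real.cos s) s :=
      (Real.hasDerivAt_cos s).add ((Real.hasDerivAt_sin s).const_mul u)
    have := ((he.mul hc).neg).div_const (1 + u^2)
    refine this.congr_deriv ?_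
    field_simp
    ring
  rw [intervalIntegral.integral_eq_sub_of_hasDerivAt (fun s _ => h s)
    (((Real.continuous_exp.comp (continuous_id.mul continuous_const).neg).mul
      Real.continuous_sin).intervalIntegrable 0 S)]
  simp [Real.cos_zero, Real.sin_zero]
  ring

-- ∫_0^R e^{-bx} sin(ξ x) dx
lemma ftc_exp_sin_xi {b ξ : ℝ} (hb : 0 ≤ b) (hξ : 0 < ξ) (R : ℝ) :
    ∫ x in (0:ℝ)..R, Real.exp (-(b*x)) * Real.sin (ξ*x)
      = (ξ - Real.exp (-(b*R)) * (b * Real.sin (ξ*R) + ξ * Real.cos (ξ*R))) / (b^2 + ξ^2) := by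
  have hD : b^2 + ξ^2 ≠ 0 := by positivity
  have h : ∀ x : ℝ, HasDerivAt
      (fun x => -(Real.exp (-(b*x)) * (b * Real.sin (ξ*x) + ξ * Real.cos (ξ*x))) / (b^2 + ξ^2))
      (Real.exp (-(b*x)) * Real.sin (ξ*x)) x := by
    intro x
    have he : HasDerivAt (fun x : ℝ => Real.exp (-(b*x))) (-b * Real.exp (-(b*x))) x := by
      have := (Real.hasDerivAt_exp (-(b*x))).comp x (((hasDerivAt_id x).const_mul b).neg)
      simpa [mul_comm, Function.comp_def] using this
    have hsx : HasDerivAt (fun x : ℝ => Real.sin (ξ*x)) (ξ * Real.cos (ξ*x)) x := by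
      have := (Real.hasDerivAt_sin (ξ*x)).comp x ((hasDerivAt_id x).const_mul ξ)
      simpa [mul_comm, Function.comp_def] using this
    have hcx : HasDerivAt (fun x : ℝ => Real.cos (ξ*x)) (-(ξ * Real.sin (ξ*x))) x := by
      have := (Real.hasDerivAt_cos (ξ*x)).comp x ((hasDerivAt_id x).const_mul ξ)
      simpa [mul_comm, Function.comp_def] using this
    have hc : HasDerivAt (fun x : ℝ => b * Real.sin (ξ*x) + ξ * Real.cos (ξ*x))
        (b * (ξ * Real.cos (ξ*x)) + ξ * (-(ξ * Real.sin (ξ*x)))) x :=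
      (hsx.const_mul b).add (hcx.const_mul ξ)
    have := ((he.mul hc).neg).div_const (b^2 + ξ^2)
    refine this.congr_deriv ?_
    field_simp
    ring
  rw [intervalIntegral.integral_eq_sub_of_hasDerivAt (fun x _ => h x)
    (((Real.continuous_exp.comp (continuous_const.mul continuous_id).neg).mul
      (Real.continuous_sin.comp (continuous_const.mul continuous_id))).intervalIntegrable 0 R)]
  simp [Real.cos_zero, Real.sin_zero]
  ring

-- ∫_{Ioi 0} e^{-cu} du = 1/c
lemma integral_exp_neg_mul {c : ℝ} (hc : 0 < c) :
    ∫ u in Ioi (0:ℝ), Real.exp (-(c*u)) = 1/c := by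
  have h : ∀ u : ℝ, HasDerivAt (fun u => -Real.exp (-(c*u)) / c) (Real.exp (-(c*u))) u := by
    intro u
    have he : HasDerivAt (fun u : ℝ => Real.exp (-(c*u))) (-c * Real.exp (-(c*u))) u := by
      have := (Real.hasDerivAt_exp (-(c*u))).comp u (((hasDerivAt_id u).const_mul c).neg)
      simpa [mul_comm, Function.comp_def] using this
    have := (he.neg).div_const c
    refine this.congr_deriv ?_
    field_simp
  have hlim : Tendsto (fun u => -Real.exp (-(c*u)) / c) atTop (𝓝 0) := by
    have : Tendsto (fun u : ℝ => Real.exp (-(c*u))) atTop (𝓝 0) := by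
      apply Real.tendsto_exp_atBot.comp
      exact tendsto_neg_atBot_iff.mpr (tendsto_id.const_mul_atTop hc)
    simpa using (this.neg).div_const c
  have hint : IntegrableOn (fun u : ℝ => Real.exp (-(c*u))) (Ioi 0) := by
    simpa [neg_mul] using exp_neg_integrableOn_Ioi 0 hc
  have := MeasureTheory.integral_Ioi_of_hasDerivAt_of_tendsto
    (f := fun u => -Real.exp (-(c*u)) / c) (((Real.continuous_exp.comp (continuous_const.mul continuous_id).neg).neg.div_const c).continuousWithinAt) (fun x _ => h x) hint hlim
  rw [this]; field_simp; simp


set_option maxHeartbeats 1000000 in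
lemma fubini_rep {y : ℝ} (hy : 0 < y) {S : ℝ} (hS : 0 ≤ S) :
    ∫ s in (0:ℝ)..S, Real.sin s / (s + y)
      = ∫ u in Ioi (0:ℝ), Real.exp (-(y*u)) *
          ((1 - Real.exp (-(S*u)) * (Real.cos S + u * Real.sin S)) / (1 + u^2)) := by
  rw [intervalIntegral.integral_of_le hS]
  have step1 : ∫ s in Ioc (0:ℝ) S, Real.sin s / (s + y)
      = ∫ s in Ioc (0:ℝ) S, ∫ u in Ioi (0:ℝ), Real.sin s * Real.exp (-((s+y)*u)) := by
    refine setIntegral_congr_fun measurableSet_Ioc (fun s hs => ?_)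
    have hsy : 0 < s + y := by have := hs.1; linarith
    rw [MeasureTheory.integral_const_mul, integral_exp_neg_mul hsy]
    field_simp
  rw [step1]
  have hexp : IntegrableOn (fun x : ℝ => Real.exp (-(y * x))) (Ioi 0) := by
    simpa [neg_mul] using exp_neg_integrableOn_Ioi 0 hy
  have hg : Integrable (fun z : ℝ × ℝ => (1:ℝ) * Real.exp (-(y * z.2)))
      ((volume.restrict (Ioc (0:ℝ) S)).prod (volume.restrict (Ioi (0:ℝ)))) :=
    Integrable.mul_prod (integrable_const (1:ℝ)) hexp
  have hint : Integrable (Function.uncurry fun s u => Real.sin s * Real.exp (-((s+y)*u)))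
      ((volume.restrict (Ioc (0:ℝ) S)).prod (volume.restrict (Ioi (0:ℝ)))) := by
    refine hg.mono' ?_ ?_
    · exact ((Real.continuous_sin.comp continuous_fst).mul
        (Real.continuous_exp.comp (((continuous_fst.add continuous_const).mul continuous_snd).neg))).aestronglyMeasurable
    · rw [Measure.prod_restrict]
      filter_upwards [ae_restrict_mem (measurableSet_Ioc.prod measurableSet_Ioi)] with z hz
      obtain ⟨hz1, hz2⟩ := hz
      simp only [Function.uncurry, one_mul, Real.norm_eq_abs, abs_mul,
        abs_of_nonneg (Real.exp_pos _).le]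
      calc |Real.sin z.1| * Real.exp (-((z.1+y)*z.2))
          ≤ 1 * Real.exp (-(y*z.2)) := by
            apply mul_le_mul (Real.abs_sin_le_one z.1) (Real.exp_le_exp.mpr ?_)
              (Real.exp_pos _).le zero_le_one
            have h1 : 0 < z.1 := hz1.1
            have h2 : 0 < z.2 := hz2
            nlinarith
        _ = Real.exp (-(y*z.2)) := one_mul _
  rw [MeasureTheory.integral_integral_swap hint]
  refine setIntegral_congr_fun measurableSet_Ioi (fun u hu => ?_)
  have : ∀ s : ℝ, Real.sin s * Real.exp (-((s+y)*u))
      = Real.exp (-(y*u)) * (Real.exp (-(s*u)) * Real.sin s) := by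
    intro s
    rw [show -((s+y)*u) = -(y*u) + -(s*u) by ring, Real.exp_add]
    ring
  simp_rw [this]
  rw [MeasureTheory.integral_const_mul, ← intervalIntegral.integral_of_le hS, ftc_exp_sin]

lemma tendsto_laplace {y : ℝ} (hy : 0 < y) :
    Tendsto (fun S => ∫ s in (0:ℝ)..S, Real.sin s / (s + y)) atTop (𝓝 (gg y)) := by
  have key : Tendsto (fun S => ∫ u in Ioi (0:ℝ), Real.exp (-(y*u)) *
      ((1 - Real.exp (-(S*u)) * (Real.cos S + u * Real.sin S)) / (1 + u^2)))
      atTop (𝓝 (∫ u in Ioi (0:ℝ), Real.exp (-(y*u)) * (1 / (1 + u^2)))) := by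
    apply tendsto_integral_filter_of_dominated_convergence
      (bound := fun u => 3 * Real.exp (-(y*u)))
    · filter_upwards with S
      apply Continuous.aestronglyMeasurable
      exact (Real.continuous_exp.comp (continuous_const.mul continuous_id).neg).mul
        ((continuous_const.sub ((Real.continuous_exp.comp (continuous_const.mul continuous_id).neg).mul
          (continuous_const.add (continuous_id.mul continuous_const)))).div
          (continuous_const.add (continuous_pow 2)) (fun u => by positivity))
    · filter_upwards [eventually_ge_atTop (0:ℝ)] with S hS
      filter_upwards [ae_restrict_mem measurableSet_Ioi] with u hu
      have hu0 : (0:ℝ) < u := hu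
      have he1 : Real.exp (-(S*u)) ≤ 1 :=
        Real.exp_le_one_iff.mpr (neg_nonpos.mpr (by positivity))
      have hC : |Real.cos S + u * Real.sin S| ≤ 1 + u := by
        calc |Real.cos S + u * Real.sin S| ≤ |Real.cos S| + |u * Real.sin S| := abs_add_le _ _
          _ ≤ 1 + u := by
              rw [abs_mul, abs_of_pos hu0]
              have := Real.abs_cos_le_one S
              have := Real.abs_sin_le_one S
              nlinarith
      have hnum : |1 - Real.exp (-(S*u)) * (Real.cos S + u * Real.sin S)| ≤ 2 + u := by
        have : |Real.exp (-(S*u)) * (Real.cos S + u * Real.sin S)| ≤ 1 + u := by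
          rw [abs_mul, abs_of_pos (Real.exp_pos _)]
          calc Real.exp (-(S*u)) * |Real.cos S + u * Real.sin S|
              ≤ 1 * (1 + u) := mul_le_mul he1 hC (abs_nonneg _) zero_le_one
            _ = 1 + u := one_mul _
        calc |1 - Real.exp (-(S*u)) * (Real.cos S + u * Real.sin S)|
            ≤ |(1:ℝ)| + |Real.exp (-(S*u)) * (Real.cos S + u * Real.sin S)| := abs_sub _ _
          _ ≤ 1 + (1 + u) := by rw [abs_one]; linarith
          _ = 2 + u := by ring
      rw [Real.norm_eq_abs, abs_mul, abs_of_pos (Real.exp_pos _), abs_div,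
        abs_of_pos (by positivity : (0:ℝ) < 1 + u^2), mul_comm (3:ℝ)]
      apply mul_le_mul_of_nonneg_left _ (Real.exp_pos _).le
      rw [div_le_iff₀ (by positivity)]
      nlinarith
    · exact (Integrable.const_mul (by simpa [neg_mul, IntegrableOn] using exp_neg_integrableOn_Ioi 0 hy) 3)
    · filter_upwards [ae_restrict_mem measurableSet_Ioi] with u hu
      have hu0 : (0:ℝ) < u := hu
      have h0 : Tendsto (fun S => Real.exp (-(S*u)) * (Real.cos S + u * Real.sin S)) atTop (𝓝 0) := by
        apply squeeze_zero_norm (a := fun S => Real.exp (-(S*u)) * (1 + u))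
        · intro S
          rw [Real.norm_eq_abs, abs_mul, abs_of_pos (Real.exp_pos _)]
          apply mul_le_mul_of_nonneg_left _ (Real.exp_pos _).le
          calc |Real.cos S + u * Real.sin S| ≤ |Real.cos S| + |u * Real.sin S| := abs_add_le _ _
            _ ≤ 1 + u := by
                rw [abs_mul, abs_of_pos hu0]
                have := Real.abs_cos_le_one S
                have := Real.abs_sin_le_one S
                nlinarith
        · have : Tendsto (fun S : ℝ => Real.exp (-(S*u))) atTop (𝓝 0) := by
            apply Real.tendsto_exp_atBot.comp
            exact tendsto_neg_atBot_iff.mpr (tendsto_id.atTop_mul_const hu0)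
          simpa using this.mul_const (1 + u)
      have := (((tendsto_const_nhds (x := (1:ℝ))).sub h0).div_const (1 + u^2)).const_mul (Real.exp (-(y*u)))
      simpa using this
  have heq : ∀ᶠ S in atTop, (∫ u in Ioi (0:ℝ), Real.exp (-(y*u)) *
      ((1 - Real.exp (-(S*u)) * (Real.cos S + u * Real.sin S)) / (1 + u^2)))
      = ∫ s in (0:ℝ)..S, Real.sin s / (s + y) := by
    filter_upwards [eventually_ge_atTop (0:ℝ)] with S hS
    exact (fubini_rep hy hS).symm
  have : gg y = ∫ u in Ioi (0:ℝ), Real.exp (-(y*u)) * (1 / (1 + u^2)) := by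
    rw [gg, abs_of_pos hy]
    refine setIntegral_congr_fun measurableSet_Ioi (fun u _ => ?_)
    rw [mul_one_div]
  rw [this]
  exact key.congr' heq


lemma uIcc_subset_ne {y R : ℝ} (hy : 0 < y) (hR : y ≤ R) :
    ∀ t ∈ uIcc y R, t ≠ 0 := by
  intro t ht
  rw [uIcc_of_le hR] at ht
  exact (lt_of_lt_of_le hy ht.1).ne'

lemma ii_sin_div {y R : ℝ} (hy : 0 < y) (hR : y ≤ R) :
    IntervalIntegrable (fun t => Real.sin t / t) volume y R :=
  (ContinuousOn.div Real.continuous_sin.continuousOn continuousOn_id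
    (uIcc_subset_ne hy hR)).intervalIntegrable
lemma ii_cos_div {y R : ℝ} (hy : 0 < y) (hR : y ≤ R) :
    IntervalIntegrable (fun t => Real.cos t / t) volume y R :=
  (ContinuousOn.div Real.continuous_cos.continuousOn continuousOn_id
    (uIcc_subset_ne hy hR)).intervalIntegrable
lemma ii_cos_div_sq {y R : ℝ} (hy : 0 < y) (hR : y ≤ R) :
    IntervalIntegrable (fun t => Real.cos t / t^2) volume y R :=
  (ContinuousOn.div Real.continuous_cos.continuousOn (continuousOn_pow 2)
    (fun t ht => pow_ne_zero 2 (uIcc_subset_ne hy hR t ht))).intervalIntegrable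
lemma ii_sin_div_sq {y R : ℝ} (hy : 0 < y) (hR : y ≤ R) :
    IntervalIntegrable (fun t => Real.sin t / t^2) volume y R :=
  (ContinuousOn.div Real.continuous_sin.continuousOn (continuousOn_pow 2)
    (fun t ht => pow_ne_zero 2 (uIcc_subset_ne hy hR t ht))).intervalIntegrable

lemma ftc_sin_osc {y R : ℝ} (hy : 0 < y) (hR : y ≤ R) :
    (∫ t in y..R, Real.sin t / t)
      = (-(Real.cos R / R) + Real.cos y / y) - ∫ t in y..R, Real.cos t / t^2 := by
  have hftc : ∫ t in y..R, (Real.sin t / t + Real.cos t / t^2)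
      = -(Real.cos R / R) - -(Real.cos y / y) := by
    apply intervalIntegral.integral_eq_sub_of_hasDerivAt
    · intro t ht
      have ht0 : t ≠ 0 := uIcc_subset_ne hy hR t ht
      have := ((Real.hasDerivAt_cos t).div (hasDerivAt_id t) ht0).neg
      refine this.congr_deriv ?_
      simp only [id_eq]
      field_simp
      ring
    · exact ((ii_sin_div hy hR).add (ii_cos_div_sq hy hR))
  rw [intervalIntegral.integral_add (ii_sin_div hy hR) (ii_cos_div_sq hy hR)] at hftc
  linarith

lemma ftc_cos_osc {y R : ℝ} (hy : 0 < y) (hR : y ≤ R) :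
    (∫ t in y..R, Real.cos t / t)
      = (Real.sin R / R - Real.sin y / y) + ∫ t in y..R, Real.sin t / t^2 := by
  have hftc : ∫ t in y..R, (Real.cos t / t - Real.sin t / t^2)
      = Real.sin R / R - Real.sin y / y := by
    apply intervalIntegral.integral_eq_sub_of_hasDerivAt
    · intro t ht
      have ht0 : t ≠ 0 := uIcc_subset_ne hy hR t ht
      have := (Real.hasDerivAt_sin t).div (hasDerivAt_id t) ht0
      refine this.congr_deriv ?_
      simp only [id_eq]
      field_simp
    · exact ((ii_cos_div hy hR).sub (ii_sin_div_sq hy hR))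
  rw [intervalIntegral.integral_sub (ii_cos_div hy hR) (ii_sin_div_sq hy hR)] at hftc
  linarith

lemma integrableOn_cos_div_sq {y : ℝ} (hy : 0 < y) :
    IntegrableOn (fun t => Real.cos t / t^2) (Ioi y) := by
  apply Integrable.mono' ((integrableOn_Ioi_rpow_of_lt (by norm_num : (-2:ℝ) < -1) hy))
  · exact (ContinuousOn.div Real.continuous_cos.continuousOn (continuousOn_pow 2)
      (fun t ht => pow_ne_zero 2 (lt_of_lt_of_le hy (le_of_lt ht)).ne')).aestronglyMeasurable measurableSet_Ioi
  · filter_upwards [ae_restrict_mem measurableSet_Ioi] with t ht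
    have ht0 : 0 < t := lt_trans hy ht
    rw [Real.norm_eq_abs, abs_div, abs_of_pos (by positivity : (0:ℝ) < t^2),
      Real.rpow_neg ht0.le, Real.rpow_two]
    rw [div_le_iff₀ (by positivity), inv_mul_cancel₀ (by positivity)]
    exact Real.abs_cos_le_one t
lemma integrableOn_sin_div_sq {y : ℝ} (hy : 0 < y) :
    IntegrableOn (fun t => Real.sin t / t^2) (Ioi y) := by
  apply Integrable.mono' ((integrableOn_Ioi_rpow_of_lt (by norm_num : (-2:ℝ) < -1) hy))
  · exact (ContinuousOn.div Real.continuous_sin.continuousOn (continuousOn_pow 2)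
      (fun t ht => pow_ne_zero 2 (lt_of_lt_of_le hy (le_of_lt ht)).ne')).aestronglyMeasurable measurableSet_Ioi
  · filter_upwards [ae_restrict_mem measurableSet_Ioi] with t ht
    have ht0 : 0 < t := lt_trans hy ht
    rw [Real.norm_eq_abs, abs_div, abs_of_pos (by positivity : (0:ℝ) < t^2),
      Real.rpow_neg ht0.le, Real.rpow_two]
    rw [div_le_iff₀ (by positivity), inv_mul_cancel₀ (by positivity)]
    exact Real.abs_sin_le_one t

lemma cos_div_tendsto_zero : Tendsto (fun R : ℝ => Real.cos R / R) atTop (𝓝 0) := by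
  apply squeeze_zero_norm' (a := fun R : ℝ => 1 / R)
  · filter_upwards [eventually_ge_atTop (1:ℝ)] with R hR
    rw [Real.norm_eq_abs, abs_div, abs_of_pos (by linarith : (0:ℝ) < R)]
    exact div_le_div_of_nonneg_right (Real.abs_cos_le_one R) (by linarith) |>.trans_eq rfl
  · simpa [one_div] using tendsto_inv_atTop_zero

lemma sin_div_tendsto_zero : Tendsto (fun R : ℝ => Real.sin R / R) atTop (𝓝 0) := by
  apply squeeze_zero_norm' (a := fun R : ℝ => 1 / R)
  · filter_upwards [eventually_ge_atTop (1:ℝ)] with R hR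
    rw [Real.norm_eq_abs, abs_div, abs_of_pos (by linarith : (0:ℝ) < R)]
    exact div_le_div_of_nonneg_right (Real.abs_sin_le_one R) (by linarith) |>.trans_eq rfl
  · simpa [one_div] using tendsto_inv_atTop_zero

lemma tendsto_sin_int {y : ℝ} (hy : 0 < y) :
    Tendsto (fun R => ∫ t in y..R, Real.sin t / t) atTop
      (𝓝 (Real.cos y / y - ∫ t in Ioi y, Real.cos t / t^2)) := by
  have h1 : Tendsto (fun R => (-(Real.cos R / R) + Real.cos y / y)
      - ∫ t in y..R, Real.cos t / t^2) atTop
      (𝓝 ((-(0:ℝ) + Real.cos y / y) - ∫ t in Ioi y, Real.cos t / t^2)) :=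
    ((cos_div_tendsto_zero.neg.add tendsto_const_nhds).sub
      (intervalIntegral_tendsto_integral_Ioi y (integrableOn_cos_div_sq hy) tendsto_id))
  rw [neg_zero, zero_add] at h1
  apply h1.congr'
  filter_upwards [eventually_ge_atTop y] with R hR
  exact (ftc_sin_osc hy hR).symm

lemma tendsto_cos_int {y : ℝ} (hy : 0 < y) :
    Tendsto (fun R => ∫ t in y..R, Real.cos t / t) atTop
      (𝓝 (-(Real.sin y / y) + ∫ t in Ioi y, Real.sin t / t^2)) := by
  have h1 : Tendsto (fun R => (Real.sin R / R - Real.sin y / y)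
      + ∫ t in y..R, Real.sin t / t^2) atTop
      (𝓝 (((0:ℝ) - Real.sin y / y) + ∫ t in Ioi y, Real.sin t / t^2)) :=
    ((sin_div_tendsto_zero.sub tendsto_const_nhds).add
      (intervalIntegral_tendsto_integral_Ioi y (integrableOn_sin_div_sq hy) tendsto_id))
  rw [zero_sub] at h1
  apply h1.congr'
  filter_upwards [eventually_ge_atTop y] with R hR
  exact (ftc_cos_osc hy hR).symm

lemma si_ci_key {y : ℝ} (hy : 0 < y) :
    si y * Real.cos y - ci y * Real.sin y = -gg y := by
  set Ls := Real.cos y / y - ∫ t in Ioi y, Real.cos t / t^2 with hLs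
  set Lc := -(Real.sin y / y) + ∫ t in Ioi y, Real.sin t / t^2 with hLc
  have hs := tendsto_sin_int hy
  have hc := tendsto_cos_int hy
  have hsi : si y = -Ls := by rw [si, hs.limUnder_eq]
  have hci : ci y = -Lc := by rw [ci, hc.limUnder_eq]
  have hcomb : Tendsto (fun R => (∫ t in y..R, Real.sin t / t) * Real.cos y
      - (∫ t in y..R, Real.cos t / t) * Real.sin y) atTop
      (𝓝 (Ls * Real.cos y - Lc * Real.sin y)) :=
    (hs.mul_const _).sub (hc.mul_const _)
  have heq : ∀ᶠ R in atTop, (∫ t in y..R, Real.sin t / t) * Real.cos y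
      - (∫ t in y..R, Real.cos t / t) * Real.sin y
      = ∫ s in (0:ℝ)..(R - y), Real.sin s / (s + y) := by
    filter_upwards [eventually_ge_atTop y] with R hR
    have e1 : (∫ t in y..R, Real.sin t / t) * Real.cos y
        - (∫ t in y..R, Real.cos t / t) * Real.sin y
        = ∫ t in y..R, (Real.sin t / t * Real.cos y - Real.cos t / t * Real.sin y) := by
      rw [intervalIntegral.integral_sub ((ii_sin_div hy hR).mul_const _)
        ((ii_cos_div hy hR).mul_const _), intervalIntegral.integral_mul_const,
        intervalIntegral.integral_mul_const]
    have e2 : ∀ t : ℝ, Real.sin t / t * Real.cos y - Real.cos t / t * Real.sin y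
        = Real.sin (t - y) / t := by
      intro t
      rw [Real.sin_sub]
      ring
    simp_rw [e1, e2]
    have := intervalIntegral.integral_comp_add_right (a := (0:ℝ)) (b := R - y)
      (fun t => Real.sin (t - y) / t) y
    simp only [zero_add, sub_add_cancel, add_sub_cancel_right] at this
    rw [← this]
  have hlap : Tendsto (fun R : ℝ => ∫ s in (0:ℝ)..(R - y), Real.sin s / (s + y)) atTop
      (𝓝 (gg y)) :=
    (tendsto_laplace hy).comp (tendsto_atTop_add_const_right atTop (-y) tendsto_id)
  have huniq : Ls * Real.cos y - Lc * Real.sin y = gg y :=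
    tendsto_nhds_unique (hcomb.congr' heq) hlap
  rw [hsi, hci]
  linarith

lemma final_integrable {a ξ : ℝ} (ha : 0 < a) (hξ : 0 < ξ) :
    IntegrableOn (fun u => ξ / (((a*u)^2 + ξ^2) * (1 + u^2))) (Ioi 0) := by
  have hb : Integrable (fun u : ℝ => (1/ξ) * (1 + u^2)⁻¹) :=
    integrable_inv_one_add_sq.const_mul _
  apply Integrable.mono' hb.integrableOn
  · apply Continuous.aestronglyMeasurable
    exact continuous_const.div (((continuous_const.mul continuous_id).pow 2 |>.add
      continuous_const).mul (continuous_const.add (continuous_pow 2)))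
      (fun u => by positivity)
  · filter_upwards with u
    rw [Real.norm_eq_abs, abs_of_pos (by positivity),
      div_le_iff₀ (by positivity : (0:ℝ) < ((a*u)^2 + ξ^2) * (1 + u^2))]
    have h1 : ξ * ξ ≤ (a*u)^2 + ξ^2 := by nlinarith [sq_nonneg (a*u)]
    calc ξ = (1/ξ) * (1+u^2)⁻¹ * ((ξ*ξ) * (1+u^2)) := by
            field_simp
      _ ≤ (1/ξ) * (1+u^2)⁻¹ * (((a*u)^2+ξ^2) * (1+u^2)) := by
            apply mul_le_mul_of_nonneg_left _ (by positivity)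
            exact mul_le_mul_of_nonneg_right h1 (by positivity)

lemma final_integral {a ξ : ℝ} (ha : 0 < a) (hξ : 0 < ξ) :
    ∫ u in Ioi (0:ℝ), ξ / (((a*u)^2 + ξ^2) * (1 + u^2)) = Real.pi / (2*(ξ+a)) := by
  have hplus : (0:ℝ) < ξ + a := by linarith
  rcases eq_or_ne ξ a with rfl | hne
  · -- case ξ = a
    set f : ℝ → ℝ := fun u => (Real.arctan u + u/(1+u^2)) / (2*ξ) with hf
    have hderiv : ∀ u : ℝ, HasDerivAt f (ξ / (((ξ*u)^2 + ξ^2) * (1 + u^2))) u := by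
      intro u
      have h2 : HasDerivAt (fun u : ℝ => 1 + u^2) (2*u) u := by
        simpa using ((hasDerivAt_pow 2 u).const_add 1)
      have hq : HasDerivAt (fun u : ℝ => u/(1+u^2))
          ((1*(1+u^2) - u*(2*u))/(1+u^2)^2) u :=
        (hasDerivAt_id u).div h2 (by positivity)
      have := ((Real.hasDerivAt_arctan u).add hq).div_const (2*ξ)
      refine this.congr_deriv ?_
      have h1 : ((ξ*u)^2 + ξ^2) = ξ^2 * (1+u^2) := by ring
      rw [h1]
      field_simp
      ring
    have hlim : Tendsto f atTop (𝓝 ((Real.pi/2 + 0)/(2*ξ))) := by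
      apply Tendsto.div_const
      apply Tendsto.add (tendsto_nhds_of_tendsto_nhdsWithin Real.tendsto_arctan_atTop)
      apply squeeze_zero_norm' (a := fun u : ℝ => 1/u)
      · filter_upwards [eventually_ge_atTop (1:ℝ)] with u hu
        rw [Real.norm_eq_abs, abs_of_nonneg (by positivity), div_le_div_iff₀ (by positivity) (by linarith)]
        nlinarith
      · simpa [one_div] using tendsto_inv_atTop_zero
    have := MeasureTheory.integral_Ioi_of_hasDerivAt_of_tendsto
      (f := f) (f' := fun u => ξ / (((ξ*u)^2 + ξ^2) * (1 + u^2))) (a := 0)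
      (hderiv 0).continuousAt.continuousWithinAt (fun x _ => hderiv x)
      (final_integrable ha hξ) hlim
    rw [this, hf]
    simp [Real.arctan_zero]
    ring
  · -- case ξ ≠ a
    have hsub : ξ^2 - a^2 ≠ 0 := by
      intro h
      apply hne
      nlinarith
    set f : ℝ → ℝ := fun u => (ξ * Real.arctan u - a * Real.arctan ((a/ξ)*u)) / (ξ^2 - a^2) with hf
    have hderiv : ∀ u : ℝ, HasDerivAt f (ξ / (((a*u)^2 + ξ^2) * (1 + u^2))) u := by
      intro u
      have hlin : HasDerivAt (fun u : ℝ => (a/ξ)*u) (a/ξ) u := by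
        simpa using (hasDerivAt_id u).const_mul (a/ξ)
      have h2 : HasDerivAt (fun u : ℝ => Real.arctan ((a/ξ)*u))
          ((1 / (1 + ((a/ξ)*u)^2)) * (a/ξ)) u :=
        (Real.hasDerivAt_arctan ((a/ξ)*u)).comp u hlin
      have := (((Real.hasDerivAt_arctan u).const_mul ξ).sub (h2.const_mul a)).div_const (ξ^2 - a^2)
      refine this.congr_deriv ?_
      have hden : (0:ℝ) < 1 + ((a/ξ)*u)^2 := by positivity
      field_simp
      ring
    have hlim : Tendsto f atTop (𝓝 ((ξ * (Real.pi/2) - a * (Real.pi/2))/(ξ^2 - a^2))) := by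
      apply Tendsto.div_const
      apply Tendsto.sub
      · exact (tendsto_nhds_of_tendsto_nhdsWithin Real.tendsto_arctan_atTop).const_mul ξ
      · apply Tendsto.const_mul
        apply (tendsto_nhds_of_tendsto_nhdsWithin Real.tendsto_arctan_atTop).comp
        exact tendsto_id.const_mul_atTop (by positivity)
    have := MeasureTheory.integral_Ioi_of_hasDerivAt_of_tendsto
      (f := f) (f' := fun u => ξ / (((a*u)^2 + ξ^2) * (1 + u^2))) (a := 0)
      (hderiv 0).continuousAt.continuousWithinAt (fun x _ => hderiv x)
      (final_integrable ha hξ) hlim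
    rw [this, hf]
    simp [Real.arctan_zero]
    rw [div_eq_div_iff hsub (by positivity : (0:ℝ) < 2*(ξ+a)).ne']
    ring


set_option maxHeartbeats 1000000 in
lemma fubini_main {a ξ : ℝ} (ha : 0 < a) (hξ : 0 < ξ) {R : ℝ} (hR : 0 ≤ R) :
    ∫ x in (0:ℝ)..R, gg (a*x) * Real.sin (ξ*x)
      = ∫ u in Ioi (0:ℝ),
          ((ξ - Real.exp (-(a*u*R)) * ((a*u) * Real.sin (ξ*R) + ξ * Real.cos (ξ*R)))
            / ((a*u)^2 + ξ^2)) * (1+u^2)⁻¹ := by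
  rw [intervalIntegral.integral_of_le hR]
  have step1 : ∫ x in Ioc (0:ℝ) R, gg (a*x) * Real.sin (ξ*x)
      = ∫ x in Ioc (0:ℝ) R, ∫ u in Ioi (0:ℝ),
          Real.sin (ξ*x) * (Real.exp (-(a*x*u)) / (1 + u^2)) := by
    refine setIntegral_congr_fun measurableSet_Ioc (fun x hx => ?_)
    rw [MeasureTheory.integral_const_mul, gg, abs_of_pos (mul_pos ha hx.1), mul_comm]
  rw [step1]
  have hg : Integrable (fun z : ℝ × ℝ => (1:ℝ) * (1 + z.2^2)⁻¹)
      ((volume.restrict (Ioc (0:ℝ) R)).prod (volume.restrict (Ioi (0:ℝ)))) :=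
    Integrable.mul_prod (integrable_const (1:ℝ)) (integrable_inv_one_add_sq.integrableOn)
  have hint : Integrable (Function.uncurry fun x u =>
      Real.sin (ξ*x) * (Real.exp (-(a*x*u)) / (1 + u^2)))
      ((volume.restrict (Ioc (0:ℝ) R)).prod (volume.restrict (Ioi (0:ℝ)))) := by
    refine hg.mono' ?_ ?_
    · exact ((Real.continuous_sin.comp (continuous_const.mul continuous_fst)).mul
        ((Real.continuous_exp.comp ((continuous_const.mul continuous_fst).mul continuous_snd).neg).div
          (continuous_const.add (continuous_snd.pow 2)) (fun z => by show (1:ℝ) + z.2^2 ≠ 0; positivity))).aestronglyMeasurable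
    · rw [Measure.prod_restrict]
      filter_upwards [ae_restrict_mem (measurableSet_Ioc.prod measurableSet_Ioi)] with z hz
      obtain ⟨hz1, hz2⟩ := hz
      have h1 : 0 < z.1 := hz1.1
      have h2 : 0 < z.2 := hz2
      simp only [Function.uncurry, one_mul, Real.norm_eq_abs, abs_mul, abs_div,
        abs_of_nonneg (Real.exp_pos _).le, abs_of_pos (by positivity : (0:ℝ) < 1 + z.2^2)]
      calc |Real.sin (ξ*z.1)| * (Real.exp (-(a*z.1*z.2)) / (1 + z.2^2))
          ≤ 1 * (1 / (1 + z.2^2)) := by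
            apply mul_le_mul (Real.abs_sin_le_one _) ?_ (by positivity) zero_le_one
            apply div_le_div_of_nonneg_right ?_ (by positivity)
            exact Real.exp_le_one_iff.mpr (neg_nonpos.mpr (by positivity))
        _ = (1 + z.2^2)⁻¹ := by rw [one_mul, one_div]
  rw [MeasureTheory.integral_integral_swap hint]
  refine setIntegral_congr_fun measurableSet_Ioi (fun u hu => ?_)
  have hu0 : (0:ℝ) < u := hu
  have hrw : ∀ x : ℝ, Real.sin (ξ*x) * (Real.exp (-(a*x*u)) / (1 + u^2))
      = (Real.exp (-((a*u)*x)) * Real.sin (ξ*x)) * (1+u^2)⁻¹ := by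
    intro x
    rw [show -(a*x*u) = -((a*u)*x) by ring]
    field_simp
  simp_rw [hrw]
  rw [MeasureTheory.integral_mul_const, ← intervalIntegral.integral_of_le hR,
    ftc_exp_sin_xi (by positivity : (0:ℝ) ≤ a*u) hξ R]

set_option maxHeartbeats 1000000 in
lemma tendsto_main {a ξ : ℝ} (ha : 0 < a) (hξ : 0 < ξ) :
    Tendsto (fun R => ∫ x in (0:ℝ)..R, gg (a*x) * Real.sin (ξ*x)) atTop
      (𝓝 (Real.pi / (2*(ξ+a)))) := by
  have key : Tendsto (fun R => ∫ u in Ioi (0:ℝ),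
      ((ξ - Real.exp (-(a*u*R)) * ((a*u) * Real.sin (ξ*R) + ξ * Real.cos (ξ*R)))
        / ((a*u)^2 + ξ^2)) * (1+u^2)⁻¹) atTop
      (𝓝 (∫ u in Ioi (0:ℝ), (ξ / ((a*u)^2 + ξ^2)) * (1+u^2)⁻¹)) := by
    apply tendsto_integral_filter_of_dominated_convergence
      (bound := fun u => (5/(2*ξ)) * (1+u^2)⁻¹)
    · filter_upwards with R
      apply Continuous.aestronglyMeasurable
      apply Continuous.mul
      · apply Continuous.div
        · exact continuous_const.sub ((Real.continuous_exp.comp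
            ((continuous_const.mul continuous_id).mul continuous_const).neg).mul
            (((continuous_const.mul continuous_id).mul continuous_const).add continuous_const))
        · exact ((continuous_const.mul continuous_id).pow 2).add continuous_const
        · intro u; positivity
      · exact (continuous_const.add (continuous_pow 2)).inv₀ (fun u => by show (1:ℝ) + u^2 ≠ 0; positivity)
    · filter_upwards [eventually_ge_atTop (0:ℝ)] with R hR
      filter_upwards [ae_restrict_mem measurableSet_Ioi] with u hu
      have hu0 : (0:ℝ) < u := hu
      have he1 : Real.exp (-(a*u*R)) ≤ 1 :=
        Real.exp_le_one_iff.mpr (neg_nonpos.mpr (by positivity))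
      have hC : |(a*u) * Real.sin (ξ*R) + ξ * Real.cos (ξ*R)| ≤ a*u + ξ := by
        calc |(a*u) * Real.sin (ξ*R) + ξ * Real.cos (ξ*R)|
            ≤ |(a*u) * Real.sin (ξ*R)| + |ξ * Real.cos (ξ*R)| := abs_add_le _ _
          _ ≤ a*u + ξ := by
              simp only [abs_mul, abs_of_pos ha, abs_of_pos hu0, abs_of_pos hξ]
              have := Real.abs_sin_le_one (ξ*R)
              have := Real.abs_cos_le_one (ξ*R)
              nlinarith [abs_nonneg (Real.sin (ξ*R)), abs_nonneg (Real.cos (ξ*R)), mul_pos ha hu0]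
      have hnum : |ξ - Real.exp (-(a*u*R)) * ((a*u) * Real.sin (ξ*R) + ξ * Real.cos (ξ*R))|
          ≤ 2*ξ + a*u := by
        have h3 : |Real.exp (-(a*u*R)) * ((a*u) * Real.sin (ξ*R) + ξ * Real.cos (ξ*R))|
            ≤ a*u + ξ := by
          rw [abs_mul, abs_of_pos (Real.exp_pos _)]
          calc Real.exp (-(a*u*R)) * |(a*u) * Real.sin (ξ*R) + ξ * Real.cos (ξ*R)|
              ≤ 1 * (a*u + ξ) := mul_le_mul he1 hC (abs_nonneg _) zero_le_one
            _ = a*u + ξ := one_mul _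
        calc |ξ - Real.exp (-(a*u*R)) * ((a*u) * Real.sin (ξ*R) + ξ * Real.cos (ξ*R))|
            ≤ |ξ| + |Real.exp (-(a*u*R)) * ((a*u) * Real.sin (ξ*R) + ξ * Real.cos (ξ*R))| :=
              abs_sub _ _
          _ ≤ ξ + (a*u + ξ) := by rw [abs_of_pos hξ]; linarith
          _ = 2*ξ + a*u := by ring
      rw [Real.norm_eq_abs, abs_mul, abs_div, abs_of_pos (by positivity : (0:ℝ) < (a*u)^2 + ξ^2),
        abs_of_pos (by positivity : (0:ℝ) < ((1:ℝ)+u^2)⁻¹)]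
      apply mul_le_mul_of_nonneg_right _ (by positivity)
      rw [div_le_iff₀ (by positivity : (0:ℝ) < (a*u)^2 + ξ^2)]
      calc |ξ - Real.exp (-(a*u*R)) * ((a*u) * Real.sin (ξ*R) + ξ * Real.cos (ξ*R))|
          ≤ 2*ξ + a*u := hnum
        _ ≤ 5/(2*ξ) * ((a*u)^2 + ξ^2) := by
            rw [div_mul_eq_mul_div, le_div_iff₀ (by positivity : (0:ℝ) < 2*ξ)]
            nlinarith [sq_nonneg (a*u - ξ), sq_nonneg (a*u)]
    · exact (integrable_inv_one_add_sq.integrableOn).const_mul _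
    · filter_upwards [ae_restrict_mem measurableSet_Ioi] with u hu
      have hu0 : (0:ℝ) < u := hu
      have h0 : Tendsto (fun R => Real.exp (-(a*u*R)) *
          ((a*u) * Real.sin (ξ*R) + ξ * Real.cos (ξ*R))) atTop (𝓝 0) := by
        apply squeeze_zero_norm (a := fun R => Real.exp (-(a*u*R)) * (a*u + ξ))
        · intro R
          rw [Real.norm_eq_abs, abs_mul, abs_of_pos (Real.exp_pos _)]
          apply mul_le_mul_of_nonneg_left _ (Real.exp_pos _).le
          calc |(a*u) * Real.sin (ξ*R) + ξ * Real.cos (ξ*R)|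
              ≤ |(a*u) * Real.sin (ξ*R)| + |ξ * Real.cos (ξ*R)| := abs_add_le _ _
            _ ≤ a*u + ξ := by
                simp only [abs_mul, abs_of_pos ha, abs_of_pos hu0, abs_of_pos hξ]
                have := Real.abs_sin_le_one (ξ*R)
                have := Real.abs_cos_le_one (ξ*R)
                nlinarith [abs_nonneg (Real.sin (ξ*R)), abs_nonneg (Real.cos (ξ*R)), mul_pos ha hu0]
        · have : Tendsto (fun R : ℝ => Real.exp (-(a*u*R))) atTop (𝓝 0) := by
            apply Real.tendsto_exp_atBot.comp
            exact tendsto_neg_atBot_iff.mpr (tendsto_id.const_mul_atTop (by positivity : (0:ℝ) < a*u))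
          simpa using this.mul_const (a*u + ξ)
      have := ((((tendsto_const_nhds (x := ξ)).sub h0).div_const ((a*u)^2 + ξ^2)).mul_const
        ((1:ℝ)+u^2)⁻¹)
      simpa using this
  have hval : (∫ u in Ioi (0:ℝ), (ξ / ((a*u)^2 + ξ^2)) * (1+u^2)⁻¹) = Real.pi / (2*(ξ+a)) := by
    rw [← final_integral ha hξ]
    refine setIntegral_congr_fun measurableSet_Ioi (fun u _ => ?_)
    rw [← div_div, div_eq_mul_inv]
    ring
  rw [← hval]
  apply key.congr'
  filter_upwards [eventually_ge_atTop (0:ℝ)] with R hR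
  exact (fubini_main ha hξ hR).symm

lemma Sker_eq {a : ℝ} (ha : 0 < a) (x : ℝ) :
    Sker a x = -(Real.sign x * gg (a * |x|)) := by
  rcases eq_or_ne x 0 with rfl | hx
  · simp [Sker, Real.sign_zero]
  · rw [Sker, si_ci_key (by positivity : 0 < a * |x|)]
    ring

lemma sign_abs_le (x : ℝ) : |Real.sign x| ≤ 1 := by
  rcases lt_trichotomy x 0 with h | rfl | h
  · rw [Real.sign_of_neg h]; norm_num
  · rw [Real.sign_zero]; norm_num
  · rw [Real.sign_of_pos h]; norm_num

lemma Sker_abs_le {a : ℝ} (ha : 0 < a) (x : ℝ) : |Sker a x| ≤ Real.pi / 2 := by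
  rw [Sker_eq ha, abs_neg, abs_mul]
  calc |Real.sign x| * |gg (a * |x|)|
      ≤ 1 * (Real.pi / 2) := by
        apply mul_le_mul (sign_abs_le x) _ (abs_nonneg _) zero_le_one
        rw [abs_of_nonneg (gg_nonneg _)]
        exact gg_le _
    _ = Real.pi / 2 := one_mul _

lemma measurable_sign : Measurable Real.sign := by
  have : Real.sign = fun r : ℝ => if r < 0 then (-1:ℝ) else if 0 < r then 1 else 0 := by
    funext r; rfl
  rw [this]
  exact Measurable.ite measurableSet_Iio measurable_const
    (Measurable.ite measurableSet_Ioi measurable_const measurable_const)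

lemma Sker_measurable {a : ℝ} (ha : 0 < a) : Measurable (Sker a) := by
  have : Sker a = fun x => -(Real.sign x * gg (a * |x|)) := funext (Sker_eq ha)
  rw [this]
  exact (measurable_sign.mul (gg_cont.measurable.comp
    (measurable_const.mul measurable_abs))).neg

lemma Sker_odd {a : ℝ} (ha : 0 < a) (x : ℝ) : Sker a (-x) = -Sker a x := by
  rw [Sker_eq ha, Sker_eq ha, Real.sign_neg, abs_neg]
  ring

lemma part1 {a : ℝ} (ha : 0 < a) {ξ : ℝ} (hξ : 0 < ξ) :
    Tendsto (fun R : ℝ => ∫ x in (0:ℝ)..R, Sker a x * Real.sin (ξ * x))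
      atTop (𝓝 (-(Real.pi / (2 * (ξ + a))))) := by
  apply Tendsto.congr' _ ((tendsto_main ha hξ).neg)
  filter_upwards [eventually_ge_atTop (0:ℝ)] with R hR
  rw [← intervalIntegral.integral_neg]
  apply intervalIntegral.integral_congr
  intro x hx
  rw [uIcc_of_le hR] at hx
  show -(gg (a * x) * Real.sin (ξ * x)) = Sker a x * Real.sin (ξ * x)
  rcases eq_or_lt_of_le hx.1 with rfl | hx0
  · simp
  · rw [Sker_eq ha, Real.sign_of_pos hx0, abs_of_pos hx0]
    ring

end Aux

section Main
open Set

/-- For `ξ > 0`, `∫_0^∞ S_a(x) sin(ξx) dx = -π/(2(ξ+a))` in the improper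
sense; consequently the (improper, symmetric) Fourier transform of the odd function
`S_a` equals `-iπ sign(ξ)/(|ξ|+a)` for `ξ ≠ 0`. -/
theorem stmt6 (a : ℝ) (ha : 0 < a) :
    (∀ ξ : ℝ, 0 < ξ →
      Tendsto (fun R : ℝ => ∫ x in (0:ℝ)..R, Sker a x * Real.sin (ξ * x))
        atTop (nhds (-(Real.pi / (2 * (ξ + a)))))) ∧
    (∀ ξ : ℝ, ξ ≠ 0 →
      Tendsto (fun R : ℝ => ∫ x in (-R)..R, (Sker a x : ℂ) * Complex.exp (Complex.I * ξ * x))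
        atTop (nhds (-Complex.I * Real.pi * (Real.sign ξ : ℂ) / ((|ξ| : ℝ) + a)))) := by
  constructor
  · exact fun ξ hξ => part1 ha hξ
  · intro ξ hξ
    -- integrability of the complex integrand
    have hbdd : ∀ (F : ℝ → ℂ), Measurable F → (∀ x, ‖F x‖ ≤ Real.pi/2) →
        ∀ c d : ℝ, IntervalIntegrable F volume c d := by
      intro F hm hb c d
      rw [intervalIntegrable_iff]
      apply Measure.integrableOn_of_bounded measure_Ioc_lt_top.ne
        hm.aestronglyMeasurable
      filter_upwards with x using hb x
    have hnorm : ∀ x : ℝ, ‖(Sker a x : ℂ) * Complex.exp (Complex.I * ξ * x)‖ ≤ Real.pi/2 := by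
      intro x
      rw [norm_mul, Complex.norm_exp]
      have hre : (Complex.I * ξ * x).re = 0 := by simp
      rw [hre, Real.exp_zero, mul_one, Complex.norm_real, Real.norm_eq_abs]
      exact Sker_abs_le ha x
    have hmeas : Measurable (fun x : ℝ => (Sker a x : ℂ) * Complex.exp (Complex.I * ξ * x)) :=
      (Complex.measurable_ofReal.comp (Sker_measurable ha)).mul
        (Complex.continuous_exp.measurable.comp
          ((measurable_const.mul (Complex.measurable_ofReal.comp measurable_id)) ))
    set h : ℝ → ℂ := fun x => (Sker a x : ℂ) * Complex.exp (Complex.I * ξ * x) with hh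
    have hInt : ∀ c d : ℝ, IntervalIntegrable h volume c d := hbdd h hmeas hnorm
    have hIntNeg : ∀ c d : ℝ, IntervalIntegrable (fun x => h (-x)) volume c d := by
      apply hbdd
      · exact hmeas.comp measurable_neg
      · intro x; exact hnorm (-x)
    -- reduce symmetric integral to one-sided sine integral
    have hsym : ∀ R : ℝ, (∫ x in (-R)..R, h x)
        = (2*Complex.I) * ((∫ x in (0:ℝ)..R, Sker a x * Real.sin (ξ*x) : ℝ) : ℂ) := by
      intro R
      have hsplit : (∫ x in (-R)..R, h x) = (∫ x in (-R)..(0:ℝ), h x) + ∫ x in (0:ℝ)..R, h x :=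
        (intervalIntegral.integral_add_adjacent_intervals (hInt (-R) 0) (hInt 0 R)).symm
      have hneg : (∫ x in (-R)..(0:ℝ), h x) = ∫ x in (0:ℝ)..R, h (-x) := by
        rw [intervalIntegral.integral_comp_neg (a := (0:ℝ)) (b := R) h]
        norm_num
      have hptw : ∀ x : ℝ, h (-x) + h x
          = (2*Complex.I) * ((Sker a x * Real.sin (ξ*x) : ℝ) : ℂ) := by
        intro x
        have e1 : Complex.I * ξ * ((x:ℝ):ℂ) = ((ξ*x : ℝ) : ℂ) * Complex.I := by push_cast; ring
        have e2 : Complex.I * ξ * ((-x:ℝ):ℂ) = ((-(ξ*x) : ℝ) : ℂ) * Complex.I := by push_cast; ring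
        show (Sker a (-x) : ℂ) * Complex.exp (Complex.I * ξ * ((-x:ℝ):ℂ))
            + (Sker a x : ℂ) * Complex.exp (Complex.I * ξ * ((x:ℝ):ℂ)) = _
        rw [e1, e2, Complex.exp_mul_I, Complex.exp_mul_I, Sker_odd ha]
        push_cast
        rw [Complex.cos_neg, Complex.sin_neg]
        ring
      rw [hsplit, hneg, ← intervalIntegral.integral_add (hIntNeg 0 R) (hInt 0 R)]
      simp_rw [hptw]
      rw [intervalIntegral.integral_const_mul, intervalIntegral.integral_ofReal]
    -- limit of the one-sided integral
    have hlim : Tendsto (fun R : ℝ => ∫ x in (0:ℝ)..R, Sker a x * Real.sin (ξ*x)) atTop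
        (𝓝 (-(Real.sign ξ * (Real.pi / (2*(|ξ|+a)))))) := by
      rcases lt_or_gt_of_ne hξ with hneg | hpos
      · have h1 := part1 ha (neg_pos.mpr hneg)
        have heq : ∀ R : ℝ, (∫ x in (0:ℝ)..R, Sker a x * Real.sin (ξ*x))
            = - ∫ x in (0:ℝ)..R, Sker a x * Real.sin ((-ξ)*x) := by
          intro R
          rw [← intervalIntegral.integral_neg]
          congr 1
          funext x
          rw [neg_mul, Real.sin_neg]
          ring
        rw [show (-(Real.sign ξ * (Real.pi / (2*(|ξ|+a))))) = -(-(Real.pi / (2 * (-ξ + a)))) by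
          rw [Real.sign_of_neg hneg, abs_of_neg hneg]; ring]
        simp_rw [heq]
        exact h1.neg
      · have h1 := part1 ha hpos
        rw [show (-(Real.sign ξ * (Real.pi / (2*(|ξ|+a))))) = -(Real.pi / (2 * (ξ + a))) by
          rw [Real.sign_of_pos hpos, abs_of_pos hpos]; ring]
        exact h1
    -- conclude
    have := ((Complex.continuous_ofReal.tendsto _).comp hlim).const_mul (2*Complex.I)
    have h2 := Tendsto.congr (fun R => (hsym R).symm) this
    convert h2 using 2
    have hden : ((|ξ|:ℝ) : ℂ) + (a:ℂ) ≠ 0 := by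
      have : (0:ℝ) < |ξ| + a := by positivity
      exact_mod_cast (by exact_mod_cast this.ne' : ((|ξ| + a : ℝ):ℂ) ≠ 0)
    push_cast
    field_simp

end Main
end
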